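/- Let A, X ∈ 𝒟⁻ be pseudo-differential operators over a commutative differential ring (𝒜, D) with A anti-symmetric (A* = −A) and X symmetric (X* = X). Then the operator B := A·(X·A)₋ − (A·X)₋·A is anti-symmetric: B* = −B. (This shows that the quadratic Poisson tensor maps symmetric cotangent directions at an anti-symmetric point to anti-symmetric tangent directions, i.e. the Poisson structure restricts to the subspace of anti-symmetric operators.) -/

import Mathlib

namespace TwoBKP

/-- The generalized binomial coefficient `binom(i,r) = i(i−1)⋯(i−r+1)/r! ∈ ℤ`
for an integer upper index `i` and `r : ℕ`. -/
noncomputable def zchoose (i : ℤ) (r : ℕ) : ℤ := Ring.choose i r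

variable {A : Type*} [CommRing A]

/-- `f : ℤ → 𝒜` represents an element of `𝒟⁻` iff its support is bounded above. -/
def IsPDO (f : ℤ → A) : Prop := ∃ N : ℤ, ∀ i : ℤ, N < i → f i = 0

/-- The product in `𝒟⁻`, coefficientwise: the coefficient of `D^n` in `A·B` is
`Σ_{i+j-r=n, r≥0} binom(i,r) f_i D^r(g_j)`. -/
noncomputable def pmul (D : A → A) (f g : ℤ → A) : ℤ → A := fun n =>
  ∑ᶠ p : ℤ × ℤ,
    if 0 ≤ p.1 + p.2 - n then
      zchoose p.1 (p.1 + p.2 - n).toNat • (f p.1 * D^[(p.1 + p.2 - n).toNat] (g p.2))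
    else 0

/-- The unit `1 = 1·D⁰` of `𝒟⁻`. -/
def pone : ℤ → A := fun n => if n = 0 then (1 : A) else 0

/-- The monomial `D^k` (in particular `pD 1 = D` and `pD (-1) = D⁻¹`). -/
def pD (k : ℤ) : ℤ → A := fun n => if n = k then (1 : A) else 0

/-- The multiplication operator `a·D⁰` attached to `a ∈ 𝒜`. -/
def sc (a : A) : ℤ → A := fun n => if n = 0 then a else 0

/-- The nonnegative (differential-operator) part `A₊ = Σ_{i≥0} f_i D^i`. -/
def posPart (f : ℤ → A) : ℤ → A := fun n => if 0 ≤ n then f n else 0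

/-- The negative part `A₋ = Σ_{i<0} f_i D^i`. -/
def negPart (f : ℤ → A) : ℤ → A := fun n => if n < 0 then f n else 0

/-- The residue `res A = f_{-1}`. -/
def res (f : ℤ → A) : A := f (-1)

/-- The adjoint `A* = Σ_i (−D)^i ∘ f_i` computed in `𝒟⁻`, coefficientwise:
the coefficient of `D^n` in `A*` is `Σ_{i ≥ n} (−1)^i binom(i, i−n) D^{i−n}(f_i)`. -/
noncomputable def adj (D : A → A) (f : ℤ → A) : ℤ → A := fun n =>
  ∑ᶠ i : ℤ,
    if 0 ≤ i - n then
      ((-1 : ℤ) ^ i.natAbs * zchoose i (i - n).toNat) • D^[(i - n).toNat] (f i)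
    else 0

/-- Powers in `𝒟⁻`. -/
noncomputable def ppow (D : A → A) (f : ℤ → A) : ℕ → ℤ → A
  | 0 => pone
  | k + 1 => pmul D f (ppow D f k)

/-- The action of a differential operator `Σ_{i≥0} f_i D^i` on an element of `𝒜`. -/
noncomputable def papply (D : A → A) (f : ℤ → A) (a : A) : A :=
  ∑ᶠ i : ℤ, if 0 ≤ i then f i * D^[i.toNat] a else 0

/-- Conjugation by `D`:  `A ↦ D·A·D⁻¹`. -/
noncomputable def conjD (D : A → A) (f : ℤ → A) : ℤ → A :=
  pmul D (pD 1) (pmul D f (pD (-1)))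

end TwoBKP

namespace TwoBKPAux

open Polynomial Finset

/-- Upper negation for the generalized binomial coefficient over `ℤ`. -/
lemma zch_neg (x : ℤ) (r : ℕ) :
    Ring.choose x r = (-1 : ℤ) ^ r * Ring.choose ((r : ℤ) - 1 - x) r := by
  have hfac : (r.factorial : ℤ) ≠ 0 := Int.natCast_ne_zero.mpr r.factorial_ne_zero
  apply mul_left_cancel₀ hfac
  have h1 := Ring.descPochhammer_eq_factorial_smul_choose x r
  have h2 := Ring.descPochhammer_eq_factorial_smul_choose ((r : ℤ) - 1 - x) r
  have h3 : (descPochhammer ℤ r).smeval ((r : ℤ) - 1 - x)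
      = (-1 : ℤ) ^ r * (descPochhammer ℤ r).smeval x := by
    rw [descPochhammer_smeval_eq_ascPochhammer]
    have : (r : ℤ) - 1 - x - r + 1 = -x := by ring
    rw [this, ascPochhammer_smeval_neg_eq_descPochhammer]
    rw [Units.smul_def, Int.coe_negOnePow_natCast, smul_eq_mul]
  have e1 : (r.factorial : ℤ) * Ring.choose x r = (descPochhammer ℤ r).smeval x := by
    rw [h1, nsmul_eq_mul]
  have e2 : (r.factorial : ℤ) * Ring.choose ((r : ℤ) - 1 - x) r
      = (descPochhammer ℤ r).smeval ((r : ℤ) - 1 - x) := by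
    rw [h2, nsmul_eq_mul]
  calc (r.factorial : ℤ) * Ring.choose x r = (descPochhammer ℤ r).smeval x := e1
    _ = (-1 : ℤ) ^ r * ((-1 : ℤ) ^ r * (descPochhammer ℤ r).smeval x) := by
        rw [← mul_assoc, ← pow_add, Even.neg_one_pow ⟨r, by ring⟩, one_mul]
    _ = (-1 : ℤ) ^ r * ((descPochhammer ℤ r).smeval ((r : ℤ) - 1 - x)) := by rw [h3]
    _ = (r.factorial : ℤ) * ((-1) ^ r * Ring.choose ((r : ℤ) - 1 - x) r) := by
        rw [← e2]; ring

/-- Chu–Vandermonde over `ℤ`, `range` form. -/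
lemma zch_vandermonde (x y : ℤ) (t : ℕ) :
    ∑ r ∈ Finset.range (t + 1), Ring.choose x r * Ring.choose y (t - r)
      = Ring.choose (x + y) t := by
  rw [Ring.add_choose_eq t (Commute.all x y),
    Finset.Nat.sum_antidiagonal_eq_sum_range_succ_mk]

/-- Chain rule for binomial coefficients, cast to multiplication in `ℤ`. -/
lemma zch_smul_chain (x : ℤ) (n k : ℕ) (hkn : k ≤ n) :
    (n.choose k : ℤ) * Ring.choose x n = Ring.choose x k * Ring.choose (x - k) (n - k) := by
  have := Ring.choose_smul_choose x hkn
  rwa [nsmul_eq_mul] at this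

/-- Symmetric chain identity. -/
lemma zch_chain_symm (x : ℤ) (a b : ℕ) :
    Ring.choose x a * Ring.choose (x - a) b = Ring.choose x b * Ring.choose (x - b) a := by
  have h1 := zch_smul_chain x (a + b) a (Nat.le_add_right a b)
  have h2 := zch_smul_chain x (a + b) b (Nat.le_add_left b a)
  rw [Nat.add_sub_cancel_left] at h1
  rw [Nat.add_sub_cancel] at h2
  rw [← h1, ← h2, Nat.choose_symm_add]

lemma zch_natCast (m r : ℕ) : Ring.choose (m : ℤ) r = (m.choose r : ℤ) :=
  Ring.choose_natCast m r

lemma zch_nonneg_eq_zero {x : ℤ} (hx : 0 ≤ x) {r : ℕ} (h : x < r) : Ring.choose x r = 0 := by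
  lift x to ℕ using hx
  rw [zch_natCast, Nat.choose_eq_zero_of_lt (by exact_mod_cast h), Nat.cast_zero]

/-- The alternating convolution identity. -/
lemma zch_alt (u : ℕ) (i x : ℤ) :
    ∑ r ∈ Finset.range (u + 1), (-1 : ℤ) ^ r * Ring.choose i r * Ring.choose (x - r) (u - r)
      = Ring.choose (x - i) u := by
  have step : ∀ r ∈ Finset.range (u + 1),
      (-1 : ℤ) ^ r * Ring.choose i r * Ring.choose (x - r) (u - r)
        = (-1 : ℤ) ^ u * (Ring.choose i r * Ring.choose ((u : ℤ) - 1 - x) (u - r)) := by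
    intro r hr
    have hru : r ≤ u := Nat.lt_succ_iff.mp (Finset.mem_range.mp hr)
    have hcast : ((u - r : ℕ) : ℤ) = (u : ℤ) - r := by
      exact_mod_cast Int.ofNat_sub hru
    have : Ring.choose (x - r) (u - r)
        = (-1 : ℤ) ^ (u - r) * Ring.choose ((u : ℤ) - 1 - x) (u - r) := by
      rw [zch_neg (x - r) (u - r), hcast]
      ring_nf
    rw [this]
    rw [show (-1 : ℤ) ^ r * Ring.choose i r * ((-1) ^ (u - r) * Ring.choose ((u:ℤ) - 1 - x) (u - r))
        = ((-1 : ℤ) ^ r * (-1) ^ (u - r)) * (Ring.choose i r * Ring.choose ((u:ℤ) - 1 - x) (u - r))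
      from by ring, ← pow_add, Nat.add_sub_cancel' hru]
  rw [Finset.sum_congr rfl step, ← Finset.mul_sum, zch_vandermonde i ((u : ℤ) - 1 - x) u]
  rw [zch_neg (x - i) u]
  ring_nf

end TwoBKPAux

section Eps

lemma eps_eq (m : ℤ) : (-1 : ℤ) ^ m.natAbs = if Even m then 1 else -1 := by
  by_cases h : Even m
  · rw [if_pos h, Even.neg_one_pow (Int.natAbs_even.mpr h)]
  · rw [if_neg h, Odd.neg_one_pow (Int.natAbs_odd.mpr (Int.not_even_iff_odd.mp h))]

lemma eps_add (a b : ℤ) :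
    (-1 : ℤ) ^ ((a + b).natAbs) = (-1) ^ a.natAbs * (-1) ^ b.natAbs := by
  rw [eps_eq, eps_eq, eps_eq]
  by_cases ha : Even a <;> by_cases hb : Even b <;>
    simp [Int.even_add, ha, hb]

lemma eps_sub_nat (x : ℤ) (r : ℕ) :
    (-1 : ℤ) ^ ((x - (r : ℤ)).natAbs) = (-1) ^ x.natAbs * (-1) ^ r := by
  rw [show x - (r : ℤ) = x + (-(r : ℤ)) by ring, eps_add]
  congr 1
  rw [Int.natAbs_neg, Int.natAbs_natCast]

end Eps

lemma coeffA (i j n : ℤ) (K t : ℕ) (hK : i + j - n = (K : ℤ)) (ht : t ≤ K) :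
    ∑ r ∈ Finset.range (K + 1),
      ((-1 : ℤ) ^ ((i + j - (r : ℤ)).natAbs) * Ring.choose (i + j - (r : ℤ)) (K - r))
        * (Ring.choose i r * ((K - r).choose t : ℤ))
      = ((-1 : ℤ) ^ i.natAbs * (-1) ^ j.natAbs)
          * (Ring.choose j (K - t) * Ring.choose (n + t) t) := by
  -- restrict to r ≤ K - t
  rw [← Finset.sum_subset (Finset.range_subset_range.mpr (by omega : K - t + 1 ≤ K + 1))
      (by
        intro r hrK hr
        rw [Finset.mem_range] at hrK
        rw [Finset.mem_range] at hr
        have hr' : K - r < t := by omega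
        rw [Nat.choose_eq_zero_of_lt hr', Int.natCast_zero, mul_zero, mul_zero])]
  have hstep : ∀ r ∈ Finset.range (K - t + 1),
      ((-1 : ℤ) ^ ((i + j - (r : ℤ)).natAbs) * Ring.choose (i + j - (r : ℤ)) (K - r))
        * (Ring.choose i r * ((K - r).choose t : ℤ))
      = (((-1 : ℤ) ^ i.natAbs * (-1) ^ j.natAbs) * Ring.choose (n + t) t)
          * ((-1 : ℤ) ^ r * Ring.choose i r * Ring.choose (i + j - (r : ℤ)) (K - t - r)) := by
    intro r hr
    have hrKt : r ≤ K - t := Nat.lt_succ_iff.mp (Finset.mem_range.mp hr)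
    have h1 : ((K - r).choose t : ℤ) * Ring.choose (i + j - (r : ℤ)) (K - r)
        = Ring.choose (i + j - (r : ℤ)) t * Ring.choose (i + j - (r : ℤ) - t) (K - r - t) :=
      TwoBKPAux.zch_smul_chain _ (K - r) t (by omega)
    have h2 : Ring.choose (i + j - (r : ℤ)) t * Ring.choose (i + j - (r : ℤ) - t) (K - r - t)
        = Ring.choose (i + j - (r : ℤ)) (K - r - t)
            * Ring.choose (i + j - (r : ℤ) - ((K - r - t : ℕ) : ℤ)) t :=
      TwoBKPAux.zch_chain_symm _ t (K - r - t)
    have h3 : i + j - (r : ℤ) - ((K - r - t : ℕ) : ℤ) = n + t := by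
      have : ((K - r - t : ℕ) : ℤ) = (K : ℤ) - r - t := by omega
      rw [this]; omega
    have h4 : K - r - t = K - t - r := by omega
    have h5 : (-1 : ℤ) ^ ((i + j - (r : ℤ)).natAbs)
        = ((-1 : ℤ) ^ i.natAbs * (-1) ^ j.natAbs) * (-1) ^ r := by
      rw [eps_sub_nat (i + j) r, eps_add]
    rw [h5]
    calc (((-1 : ℤ) ^ i.natAbs * (-1) ^ j.natAbs) * (-1) ^ r
            * Ring.choose (i + j - (r : ℤ)) (K - r))
          * (Ring.choose i r * ((K - r).choose t : ℤ))
        = (((-1 : ℤ) ^ i.natAbs * (-1) ^ j.natAbs) * (-1) ^ r * Ring.choose i r)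
            * (((K - r).choose t : ℤ) * Ring.choose (i + j - (r : ℤ)) (K - r)) := by ring
      _ = (((-1 : ℤ) ^ i.natAbs * (-1) ^ j.natAbs) * (-1) ^ r * Ring.choose i r)
            * (Ring.choose (i + j - (r : ℤ)) (K - r - t)
                * Ring.choose (i + j - (r : ℤ) - ((K - r - t : ℕ) : ℤ)) t) := by
          rw [h1, h2]
      _ = (((-1 : ℤ) ^ i.natAbs * (-1) ^ j.natAbs) * Ring.choose (n + t) t)
            * ((-1 : ℤ) ^ r * Ring.choose i r * Ring.choose (i + j - (r : ℤ)) (K - t - r)) := by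
          rw [h3, h4]; ring
  rw [Finset.sum_congr rfl hstep, ← Finset.mul_sum]
  have := TwoBKPAux.zch_alt (K - t) i (i + j)
  rw [this]
  have : i + j - i = j := by ring
  rw [this]
  ring


section Iter

variable {𝒜 : Type*} [CommRing 𝒜] (D : Derivation ℤ 𝒜 𝒜)

lemma dit_hom (s : ℕ) : (⇑D)^[s] = ⇑(D.toLinearMap ^ s) := by
  funext x
  rw [Module.End.pow_apply]
  rfl

lemma dit_zero (s : ℕ) : (⇑D)^[s] (0 : 𝒜) = 0 := by rw [dit_hom]; exact map_zero _

lemma dit_add (s : ℕ) (a b : 𝒜) : (⇑D)^[s] (a + b) = (⇑D)^[s] a + (⇑D)^[s] b := by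
  rw [dit_hom]; exact map_add _ a b

lemma dit_neg (s : ℕ) (a : 𝒜) : (⇑D)^[s] (-a) = -((⇑D)^[s] a) := by
  rw [dit_hom]; exact map_neg _ a

lemma dit_sub (s : ℕ) (a b : 𝒜) : (⇑D)^[s] (a - b) = (⇑D)^[s] a - (⇑D)^[s] b := by
  rw [dit_hom]; exact map_sub _ a b

lemma dit_zsmul (s : ℕ) (c : ℤ) (a : 𝒜) : (⇑D)^[s] (c • a) = c • (⇑D)^[s] a := by
  rw [dit_hom]; exact map_smul _ c a

lemma dit_nsmul (s : ℕ) (c : ℕ) (a : 𝒜) : (⇑D)^[s] (c • a) = c • (⇑D)^[s] a := by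
  rw [dit_hom]
  exact map_nsmul ((D.toLinearMap ^ s).toAddMonoidHom) c a

lemma dit_sum {α : Type*} (s : ℕ) (t : Finset α) (F : α → 𝒜) :
    (⇑D)^[s] (∑ x ∈ t, F x) = ∑ x ∈ t, (⇑D)^[s] (F x) := by
  rw [dit_hom]; exact map_sum _ F t

/-- Iterated Leibniz rule. -/
lemma dit_mul (a b : 𝒜) : ∀ s : ℕ,
    (⇑D)^[s] (a * b)
      = ∑ t ∈ Finset.range (s + 1), (s.choose t) • ((⇑D)^[t] a * (⇑D)^[s - t] b)
  | 0 => by simp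
  | s + 1 => by
    rw [Function.iterate_succ_apply', dit_mul a b s, map_sum]
    have hterm : ∀ t ∈ Finset.range (s + 1),
        D ((s.choose t) • ((⇑D)^[t] a * (⇑D)^[s - t] b))
          = (s.choose t) • ((⇑D)^[t + 1] a * (⇑D)^[s - t] b)
            + (s.choose t) • ((⇑D)^[t] a * (⇑D)^[s - t + 1] b) := by
      intro t _
      calc D ((s.choose t) • ((⇑D)^[t] a * (⇑D)^[s - t] b))
          = (s.choose t) • ((⇑D)^[t] a • D ((⇑D)^[s - t] b)
              + (⇑D)^[s - t] b • D ((⇑D)^[t] a)) := by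
            rw [map_nsmul, Derivation.leibniz]
        _ = (s.choose t) • (D ((⇑D)^[t] a) * (⇑D)^[s - t] b)
              + (s.choose t) • ((⇑D)^[t] a * D ((⇑D)^[s - t] b)) := by
            rw [smul_add, smul_eq_mul, smul_eq_mul]
            rw [mul_comm ((⇑D)^[s-t] b) (D ((⇑D)^[t] a)), add_comm]
        _ = (s.choose t) • ((⇑D)^[t + 1] a * (⇑D)^[s - t] b)
              + (s.choose t) • ((⇑D)^[t] a * (⇑D)^[s - t + 1] b) := by
            rw [Function.iterate_succ_apply' (⇑D) t a,
              Function.iterate_succ_apply' (⇑D) (s - t) b]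
    rw [Finset.sum_congr rfl hterm, Finset.sum_add_distrib]
    have h1 : ∑ t ∈ Finset.range (s + 2), (if t = 0 then 0 else s.choose (t - 1))
            • ((⇑D)^[t] a * (⇑D)^[s + 1 - t] b)
        = ∑ t ∈ Finset.range (s + 1), (s.choose t) • ((⇑D)^[t + 1] a * (⇑D)^[s - t] b) := by
      rw [Finset.sum_range_succ' (fun t => (if t = 0 then 0 else s.choose (t - 1))
            • ((⇑D)^[t] a * (⇑D)^[s + 1 - t] b)) (s + 1)]
      simp only [Nat.succ_ne_zero, if_false, Nat.add_sub_cancel, reduceIte, zero_smul, add_zero]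
      apply Finset.sum_congr rfl
      intro t ht
      have ht' := Finset.mem_range.mp ht
      have : s + 1 - (t + 1) = s - t := by omega
      rw [this]
    have h2 : ∑ t ∈ Finset.range (s + 1), (s.choose t) • ((⇑D)^[t] a * (⇑D)^[s - t + 1] b)
        = ∑ t ∈ Finset.range (s + 2), (s.choose t) • ((⇑D)^[t] a * (⇑D)^[s + 1 - t] b) := by
      rw [Finset.sum_range_succ (fun t => (s.choose t) • ((⇑D)^[t] a * (⇑D)^[s + 1 - t] b)) (s+1)]
      rw [Nat.choose_eq_zero_of_lt (Nat.lt_succ_self s), zero_smul, add_zero]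
      apply Finset.sum_congr rfl
      intro t ht
      have ht' := Finset.mem_range.mp ht
      have : s - t + 1 = s + 1 - t := by omega
      rw [this]
    rw [← h1, h2, ← Finset.sum_add_distrib]
    apply Finset.sum_congr rfl
    intro t ht
    rw [← add_smul]
    congr 1
    rcases t with _ | t
    · simp
    · simp only [Nat.succ_ne_zero, if_false, Nat.add_sub_cancel, reduceIte]
      rw [Nat.choose_succ_succ s t, Nat.add_comm]

end Iter

section PDO

open TwoBKP Finset

lemma finsum_eq_sum' {α M : Type*} [AddCommMonoid M] (F : α → M) (s : Finset α)
    (h : ∀ x, F x ≠ 0 → x ∈ s) : ∑ᶠ x, F x = ∑ x ∈ s, F x :=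
  finsum_eq_sum_of_support_subset F (fun x hx => h x hx)

lemma finsum_zero' {α M : Type*} [AddCommMonoid M] {F : α → M}
    (h : ∀ x, F x = 0) : ∑ᶠ x, F x = 0 := by
  rw [finsum_congr h, finsum_zero]

variable {𝒜 : Type*} [CommRing 𝒜] (D : Derivation ℤ 𝒜 𝒜) (f g : ℤ → 𝒜)

lemma pmul_bound {Nf Ng : ℤ} (hf : ∀ i, Nf < i → f i = 0) (hg : ∀ j, Ng < j → g j = 0) :
    ∀ m, Nf + Ng < m → pmul ⇑D f g m = 0 := by
  intro m hm
  apply finsum_zero'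
  rintro ⟨i, j⟩
  dsimp only [pmul]
  split_ifs with hgate
  · rcases lt_or_ge Nf i with hi | hi
    · rw [hf i hi, zero_mul, smul_zero]
    · have hj : Ng < j := by omega
      rw [hg j hj, dit_zero, mul_zero, smul_zero]
  · rfl

lemma adj_bound {Nf : ℤ} (hf : ∀ i, Nf < i → f i = 0) :
    ∀ a, Nf < a → adj ⇑D f a = 0 := by
  intro a ha
  apply finsum_zero'
  intro i
  split_ifs with hgate
  · have : Nf < i := by omega
    rw [hf i this, dit_zero, smul_zero]
  · rfl

lemma pmul_eq_sum {Nf Ng : ℤ} (hf : ∀ i, Nf < i → f i = 0) (hg : ∀ j, Ng < j → g j = 0)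
    (n : ℤ) (s : Finset (ℤ × ℤ))
    (hs : ∀ p : ℤ × ℤ, n ≤ p.1 + p.2 → p.1 ≤ Nf → p.2 ≤ Ng → p ∈ s) :
    pmul ⇑D f g n = ∑ p ∈ s,
      if 0 ≤ p.1 + p.2 - n then
        zchoose p.1 (p.1 + p.2 - n).toNat •
          (f p.1 * (⇑D)^[(p.1 + p.2 - n).toNat] (g p.2)) else 0 := by
  apply finsum_eq_sum'
  rintro ⟨i, j⟩ hne
  dsimp only at hne
  split_ifs at hne with hgate
  · have hi : i ≤ Nf := by
      by_contra hi
      rw [hf i (by omega), zero_mul, smul_zero] at hne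
      exact hne rfl
    have hj : j ≤ Ng := by
      by_contra hj
      rw [hg j (by omega), dit_zero, mul_zero, smul_zero] at hne
      exact hne rfl
    exact hs ⟨i, j⟩ (by omega) hi hj
  · exact absurd rfl hne

lemma adj_eq_sum {Nf : ℤ} (hf : ∀ i, Nf < i → f i = 0) (n : ℤ) (s : Finset ℤ)
    (hs : ∀ i, n ≤ i → i ≤ Nf → i ∈ s) :
    adj ⇑D f n = ∑ i ∈ s,
      if 0 ≤ i - n then
        ((-1 : ℤ) ^ i.natAbs * zchoose i (i - n).toNat) • (⇑D)^[(i - n).toNat] (f i)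
      else 0 := by
  apply finsum_eq_sum'
  intro i hne
  split_ifs at hne with hgate
  · have hi : i ≤ Nf := by
      by_contra hi
      rw [hf i (by omega), dit_zero, smul_zero] at hne
      exact hne rfl
    exact hs i (by omega) hi
  · exact absurd rfl hne

lemma negPart_bound : ∀ m : ℤ, (-1 : ℤ) < m → TwoBKP.negPart f m = 0 := by
  intro m hm
  simp only [TwoBKP.negPart, if_neg (by omega : ¬ m < 0)]

lemma pmul_neg_left : pmul ⇑D (-f) g = -(pmul ⇑D f g) := by
  funext n
  rw [Pi.neg_apply]
  dsimp only [pmul]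
  rw [← finsum_neg_distrib]
  apply finsum_congr
  rintro ⟨i, j⟩
  dsimp only
  split_ifs
  · rw [Pi.neg_apply, neg_mul, smul_neg]
  · rw [neg_zero]

lemma pmul_neg_right : pmul ⇑D f (-g) = -(pmul ⇑D f g) := by
  funext n
  rw [Pi.neg_apply]
  dsimp only [pmul]
  rw [← finsum_neg_distrib]
  apply finsum_congr
  rintro ⟨i, j⟩
  dsimp only
  split_ifs
  · rw [Pi.neg_apply, dit_neg, mul_neg, smul_neg]
  · rw [neg_zero]

lemma negPart_neg' : TwoBKP.negPart (-f) = -(TwoBKP.negPart f) := by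
  funext n
  rw [Pi.neg_apply]
  dsimp only [TwoBKP.negPart]
  split_ifs
  · rfl
  · rw [neg_zero]

lemma adj_sub {Nf Ng : ℤ} (hf : ∀ i, Nf < i → f i = 0) (hg : ∀ j, Ng < j → g j = 0) :
    adj ⇑D (f - g) = adj ⇑D f - adj ⇑D g := by
  funext n
  have hfg : ∀ i, max Nf Ng < i → (f - g) i = 0 := by
    intro i hi
    have h1 : f i = 0 := hf i (by omega)
    have h2 : g i = 0 := hg i (by omega)
    simp [h1, h2]
  set s : Finset ℤ := Finset.Icc n (max Nf Ng) with hs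
  have hmem : ∀ i, n ≤ i → i ≤ max Nf Ng → i ∈ s := by
    intro i h1 h2; rw [hs]; exact Finset.mem_Icc.mpr ⟨h1, h2⟩
  rw [Pi.sub_apply,
    adj_eq_sum D (f - g) hfg n s hmem,
    adj_eq_sum D f (fun i hi => hf i (by omega)) n s hmem,
    adj_eq_sum D g (fun j hj => hg j (by omega)) n s hmem,
    ← Finset.sum_sub_distrib]
  apply Finset.sum_congr rfl
  intro i _
  split_ifs
  · rw [Pi.sub_apply, dit_sub, smul_sub]
  · rw [sub_zero]

end PDO

section Main

open TwoBKP Finset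

variable {𝒜 : Type*} [CommRing 𝒜] (D : Derivation ℤ 𝒜 𝒜) (f g : ℤ → 𝒜)

lemma adj_negPart : adj ⇑D (TwoBKP.negPart f) = TwoBKP.negPart (adj ⇑D f) := by
  funext n
  by_cases hn : n < 0
  · rw [show TwoBKP.negPart (adj ⇑D f) n = adj ⇑D f n from if_pos hn]
    dsimp only [adj]
    apply finsum_congr
    intro i
    split_ifs with hgate
    · dsimp only [TwoBKP.negPart]
      split_ifs with hi
      · rfl
      · have h0 : (0 : ℤ) ≤ i := by omega
        have hz : zchoose i (i - n).toNat = 0 :=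
          TwoBKPAux.zch_nonneg_eq_zero h0
            (by rw [Int.toNat_of_nonneg hgate]; omega)
        rw [hz, mul_zero, zero_smul, zero_smul]
    · rfl
  · rw [show TwoBKP.negPart (adj ⇑D f) n = 0 from if_neg hn]
    apply finsum_zero'
    intro i
    split_ifs with hgate
    · have : ¬ i < 0 := by omega
      rw [show TwoBKP.negPart f i = 0 from if_neg this, dit_zero, smul_zero]
    · rfl


lemma adj_pmul_lhs {Nf Ng : ℤ} (hf : ∀ i, Nf < i → f i = 0) (hg : ∀ j, Ng < j → g j = 0)
    (n : ℤ) :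
    adj ⇑D (pmul ⇑D f g) n
      = ∑ p ∈ Finset.Icc (n - Ng) Nf ×ˢ Finset.Icc (n - Nf) Ng,
          (if 0 ≤ p.1 + p.2 - n then
            ∑ t ∈ Finset.range ((p.1 + p.2 - n).toNat + 1),
              (((-1 : ℤ) ^ p.1.natAbs * (-1) ^ p.2.natAbs)
                * (zchoose p.2 ((p.1 + p.2 - n).toNat - t) * zchoose (n + t) t))
                • ((⇑D)^[t] (f p.1) * (⇑D)^[(p.1 + p.2 - n).toNat - t] (g p.2))
          else 0) := by
  set B : Finset (ℤ × ℤ) := Finset.Icc (n - Ng) Nf ×ˢ Finset.Icc (n - Nf) Ng with hB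
  rw [adj_eq_sum D (pmul ⇑D f g) (pmul_bound D f g hf hg) n (Finset.Icc n (Nf + Ng))
      (fun m h1 h2 => Finset.mem_Icc.mpr ⟨h1, h2⟩)]
  have hterm : ∀ m ∈ Finset.Icc n (Nf + Ng),
      (if 0 ≤ m - n then
        ((-1 : ℤ) ^ m.natAbs * zchoose m (m - n).toNat) • (⇑D)^[(m - n).toNat]
          (pmul ⇑D f g m) else 0)
      = ∑ p ∈ B, (if 0 ≤ m - n then
          ((-1 : ℤ) ^ m.natAbs * zchoose m (m - n).toNat) • (⇑D)^[(m - n).toNat]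
            (if 0 ≤ p.1 + p.2 - m then
              zchoose p.1 (p.1 + p.2 - m).toNat •
                (f p.1 * (⇑D)^[(p.1 + p.2 - m).toNat] (g p.2)) else 0)
          else 0) := by
    intro m hm
    rw [Finset.mem_Icc] at hm
    by_cases hgm : 0 ≤ m - n
    · rw [if_pos hgm,
        pmul_eq_sum D f g hf hg m B (by
          rintro ⟨a, b⟩ h1 h2 h3
          rw [hB, Finset.mem_product, Finset.mem_Icc, Finset.mem_Icc]
          constructor <;> constructor <;> simp only [] <;> omega),
        dit_sum, Finset.smul_sum]
      exact Finset.sum_congr rfl (fun p _ => by rw [if_pos hgm])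
    · rw [if_neg hgm]
      exact (Finset.sum_eq_zero (fun p _ => by rw [if_neg hgm])).symm
  rw [Finset.sum_congr rfl hterm, Finset.sum_comm]
  apply Finset.sum_congr rfl
  rintro ⟨i, j⟩ hp
  rw [hB, Finset.mem_product, Finset.mem_Icc, Finset.mem_Icc] at hp
  obtain ⟨⟨hi1, hi2⟩, ⟨hj1, hj2⟩⟩ := hp
  simp only []
  by_cases hij : 0 ≤ i + j - n
  swap
  · rw [if_neg hij]
    apply Finset.sum_eq_zero
    intro m hm
    by_cases h1 : 0 ≤ m - n
    · rw [if_pos h1, if_neg (by omega : ¬ 0 ≤ i + j - m), dit_zero, smul_zero]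
    · rw [if_neg h1]
  · rw [if_pos hij]
    set K : ℕ := (i + j - n).toNat with hKdef
    have hK : i + j - n = (K : ℤ) := by omega
    -- restrict the m-sum to `Icc n (i+j)`
    rw [← Finset.sum_subset
        (Finset.Icc_subset_Icc (le_refl n) (by omega : i + j ≤ Nf + Ng))
        (by
          intro m hm hm'
          rw [Finset.mem_Icc] at hm
          rw [Finset.mem_Icc] at hm'
          by_cases h1 : 0 ≤ m - n
          · rw [if_pos h1, if_neg (by omega : ¬ 0 ≤ i + j - m), dit_zero, smul_zero]
          · rw [if_neg h1])]
    -- reindex m ↦ r = (i+j-m).toNat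
    have hre := Finset.sum_nbij' (s := Finset.Icc n (i + j)) (t := Finset.range (K + 1))
        (f := fun m : ℤ =>
          (if 0 ≤ m - n then
            ((-1 : ℤ) ^ m.natAbs * zchoose m (m - n).toNat)
              • (⇑D)^[(m - n).toNat]
                (if 0 ≤ i + j - m then
                  zchoose i (i + j - m).toNat •
                    (f i * (⇑D)^[(i + j - m).toNat] (g j)) else 0)
            else 0))
        (g := fun r : ℕ =>
          (if 0 ≤ (i + j - (r : ℤ)) - n then
            ((-1 : ℤ) ^ (i + j - (r : ℤ)).natAbs
                * zchoose (i + j - (r : ℤ)) ((i + j - (r : ℤ)) - n).toNat)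
              • (⇑D)^[((i + j - (r : ℤ)) - n).toNat]
                (if 0 ≤ i + j - (i + j - (r : ℤ)) then
                  zchoose i (i + j - (i + j - (r : ℤ))).toNat •
                    (f i * (⇑D)^[(i + j - (i + j - (r : ℤ))).toNat] (g j)) else 0)
            else 0))
        (i := fun m : ℤ => (i + j - m).toNat)
        (j := fun r : ℕ => i + j - (r : ℤ))
        (by
          intro m hm
          rw [Finset.mem_Icc] at hm
          simp only [Finset.mem_range]
          omega)
        (by
          intro r hr
          rw [Finset.mem_range] at hr
          simp only [Finset.mem_Icc]
          omega)
        (by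
          intro m hm
          rw [Finset.mem_Icc] at hm
          omega)
        (by
          intro r hr
          rw [Finset.mem_range] at hr
          omega)
        (by
          intro m hm
          rw [Finset.mem_Icc] at hm
          have e : i + j - ((i + j - m).toNat : ℤ) = m := by omega
          rw [e])
    rw [hre]
    -- simplify each r-term
    have hstep : ∀ r ∈ Finset.range (K + 1),
        (if 0 ≤ (i + j - (r : ℤ)) - n then
            ((-1 : ℤ) ^ (i + j - (r : ℤ)).natAbs
                * zchoose (i + j - (r : ℤ)) ((i + j - (r : ℤ)) - n).toNat)
              • (⇑D)^[((i + j - (r : ℤ)) - n).toNat]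
                (if 0 ≤ i + j - (i + j - (r : ℤ)) then
                  zchoose i (i + j - (i + j - (r : ℤ))).toNat •
                    (f i * (⇑D)^[(i + j - (i + j - (r : ℤ))).toNat] (g j)) else 0)
            else 0)
        = ∑ t ∈ Finset.range (K + 1),
            ((((-1 : ℤ) ^ (i + j - (r : ℤ)).natAbs * zchoose (i + j - (r : ℤ)) (K - r))
              * (zchoose i r * (((K - r).choose t : ℕ) : ℤ)))
              • ((⇑D)^[t] (f i) * (⇑D)^[K - t] (g j))) := by
      intro r hr
      rw [Finset.mem_range] at hr
      have e0 : (0 : ℤ) ≤ (i + j - (r : ℤ)) - n := by omega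
      have e0' : (0 : ℤ) ≤ i + j - (i + j - (r : ℤ)) := by omega
      have e1 : ((i + j - (r : ℤ)) - n).toNat = K - r := by omega
      have e2 : (i + j - (i + j - (r : ℤ))).toNat = r := by omega
      rw [if_pos e0, if_pos e0', e1, e2, dit_zsmul, dit_mul, Finset.smul_sum,
        Finset.smul_sum]
      -- extend the inner range from `K - r + 1` to `K + 1`
      rw [← Finset.sum_subset
          (Finset.range_subset_range.mpr (by omega : K - r + 1 ≤ K + 1))
          (by
            intro t htK ht
            rw [Finset.mem_range] at htK
            rw [Finset.mem_range] at ht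
            rw [Nat.choose_eq_zero_of_lt (by omega : K - r < t)]
            simp)]
      apply Finset.sum_congr rfl
      intro t ht
      rw [Finset.mem_range] at ht
      have e3 : (⇑D)^[K - r - t] ((⇑D)^[r] (g j)) = (⇑D)^[K - t] (g j) := by
        rw [← Function.iterate_add_apply]
        congr 1
        omega
      rw [e3, ← natCast_zsmul ((⇑D)^[t] (f i) * (⇑D)^[K - t] (g j)) ((K - r).choose t),
        smul_smul, smul_smul, mul_assoc]
    rw [Finset.sum_congr rfl hstep, Finset.sum_comm]
    apply Finset.sum_congr rfl
    intro t ht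
    rw [Finset.mem_range] at ht
    rw [← Finset.sum_smul]
    simp only [TwoBKP.zchoose]
    rw [coeffA i j n K t hK (by omega)]


lemma sum_swap4 {α β γ δ M : Type*} [AddCommMonoid M]
    (s₁ : Finset α) (s₂ : Finset β) (s₃ : Finset γ) (s₄ : Finset δ)
    (F : α → β → γ → δ → M) :
    (∑ a ∈ s₁, ∑ b ∈ s₂, ∑ c ∈ s₃, ∑ d ∈ s₄, F a b c d)
      = ∑ d ∈ s₄, ∑ c ∈ s₃, ∑ a ∈ s₁, ∑ b ∈ s₂, F a b c d := by
  calc (∑ a ∈ s₁, ∑ b ∈ s₂, ∑ c ∈ s₃, ∑ d ∈ s₄, F a b c d)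
      = ∑ a ∈ s₁, ∑ c ∈ s₃, ∑ b ∈ s₂, ∑ d ∈ s₄, F a b c d :=
        Finset.sum_congr rfl (fun a _ => Finset.sum_comm)
    _ = ∑ c ∈ s₃, ∑ a ∈ s₁, ∑ b ∈ s₂, ∑ d ∈ s₄, F a b c d := Finset.sum_comm
    _ = ∑ c ∈ s₃, ∑ a ∈ s₁, ∑ d ∈ s₄, ∑ b ∈ s₂, F a b c d :=
        Finset.sum_congr rfl (fun c _ => Finset.sum_congr rfl (fun a _ => Finset.sum_comm))
    _ = ∑ c ∈ s₃, ∑ d ∈ s₄, ∑ a ∈ s₁, ∑ b ∈ s₂, F a b c d :=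
        Finset.sum_congr rfl (fun c _ => Finset.sum_comm)
    _ = ∑ d ∈ s₄, ∑ c ∈ s₃, ∑ a ∈ s₁, ∑ b ∈ s₂, F a b c d := Finset.sum_comm

lemma adj_pmul_rhs {Nf Ng : ℤ} (hf : ∀ i, Nf < i → f i = 0) (hg : ∀ j, Ng < j → g j = 0)
    (n : ℤ) :
    pmul ⇑D (adj ⇑D g) (adj ⇑D f) n
      = ∑ p ∈ Finset.Icc (n - Ng) Nf ×ˢ Finset.Icc (n - Nf) Ng,
          (if 0 ≤ p.1 + p.2 - n then
            ∑ t ∈ Finset.range ((p.1 + p.2 - n).toNat + 1),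
              (((-1 : ℤ) ^ p.1.natAbs * (-1) ^ p.2.natAbs)
                * (zchoose p.2 ((p.1 + p.2 - n).toNat - t) * zchoose (n + t) t))
                • ((⇑D)^[t] (f p.1) * (⇑D)^[(p.1 + p.2 - n).toNat - t] (g p.2))
          else 0) := by
  set I : Finset ℤ := Finset.Icc (n - Ng) Nf with hI
  set J : Finset ℤ := Finset.Icc (n - Nf) Ng with hJ
  rw [pmul_eq_sum D (adj ⇑D g) (adj ⇑D f) (adj_bound D g hg) (adj_bound D f hf) n (J ×ˢ I)
      (by
        rintro ⟨a, b⟩ h1 h2 h3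
        rw [hJ, hI, Finset.mem_product, Finset.mem_Icc, Finset.mem_Icc]
        simp only [] at h1 h2 h3 ⊢
        omega)]
  have hexp : ∀ q ∈ J ×ˢ I,
      (if 0 ≤ q.1 + q.2 - n then
        zchoose q.1 (q.1 + q.2 - n).toNat •
          (adj ⇑D g q.1 * (⇑D)^[(q.1 + q.2 - n).toNat] (adj ⇑D f q.2)) else 0)
      = ∑ j' ∈ J, ∑ i' ∈ I,
          (if 0 ≤ q.1 + q.2 - n then
            zchoose q.1 (q.1 + q.2 - n).toNat •
              ((if 0 ≤ j' - q.1 then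
                  ((-1 : ℤ) ^ j'.natAbs * zchoose j' (j' - q.1).toNat)
                    • (⇑D)^[(j' - q.1).toNat] (g j') else 0)
                * (⇑D)^[(q.1 + q.2 - n).toNat]
                  (if 0 ≤ i' - q.2 then
                    ((-1 : ℤ) ^ i'.natAbs * zchoose i' (i' - q.2).toNat)
                      • (⇑D)^[(i' - q.2).toNat] (f i') else 0))
          else 0) := by
    rintro ⟨a, b⟩ hq
    rw [Finset.mem_product, hJ, hI, Finset.mem_Icc, Finset.mem_Icc] at hq
    obtain ⟨⟨ha1, ha2⟩, ⟨hb1, hb2⟩⟩ := hq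
    by_cases hgate : 0 ≤ a + b - n
    · simp only [if_pos hgate]
      rw [adj_eq_sum D g hg a J (by
            intro j' h1 h2
            rw [hJ, Finset.mem_Icc]
            omega),
        adj_eq_sum D f hf b I (by
            intro i' h1 h2
            rw [hI, Finset.mem_Icc]
            omega),
        dit_sum, Finset.sum_mul_sum, Finset.smul_sum]
      apply Finset.sum_congr rfl
      intro j' _
      rw [Finset.smul_sum]
    · simp only [if_neg hgate]
      symm
      apply Finset.sum_eq_zero
      intro j' _
      apply Finset.sum_eq_zero
      intro i' _
      rfl
  rw [Finset.sum_congr rfl hexp, Finset.sum_product, Finset.sum_product,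
    sum_swap4 J I J I _]
  apply Finset.sum_congr rfl
  intro i0 hi0
  apply Finset.sum_congr rfl
  intro j0 hj0
  rw [hI, Finset.mem_Icc] at hi0
  rw [hJ, Finset.mem_Icc] at hj0
  simp only []
  rw [← Finset.sum_product']
  by_cases hij : 0 ≤ i0 + j0 - n
  swap
  · rw [if_neg hij]
    apply Finset.sum_eq_zero
    rintro ⟨a, b⟩ hq
    rw [Finset.mem_product, hJ, hI, Finset.mem_Icc, Finset.mem_Icc] at hq
    simp only []
    by_cases h1 : 0 ≤ a + b - n
    · by_cases h2 : 0 ≤ j0 - a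
      · by_cases h3 : 0 ≤ i0 - b
        · exfalso; omega
        · rw [if_pos h1, if_neg h3, dit_zero, mul_zero, smul_zero]
      · rw [if_pos h1, if_neg h2, zero_mul, smul_zero]
    · rw [if_neg h1]
  · rw [if_pos hij]
    set K : ℕ := (i0 + j0 - n).toNat with hKdef
    have hK : i0 + j0 - n = (K : ℤ) := by omega
    -- restrict to the support
    rw [← Finset.sum_filter_of_ne (p := fun q : ℤ × ℤ => n ≤ q.1 + q.2 ∧ q.1 ≤ j0 ∧ q.2 ≤ i0)
      (by
        rintro ⟨a, b⟩ hq hne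
        simp only [] at hne ⊢
        by_cases h1 : 0 ≤ a + b - n
        · by_cases h2 : 0 ≤ j0 - a
          · by_cases h3 : 0 ≤ i0 - b
            · exact ⟨by omega, by omega, by omega⟩
            · exact absurd (by rw [if_pos h1, if_neg h3, dit_zero, mul_zero, smul_zero]) hne
          · exact absurd (by rw [if_pos h1, if_neg h2, zero_mul, smul_zero]) hne
        · exact absurd (if_neg h1) hne)]
    -- reindex to (t, ρ)
    have hre := Finset.sum_nbij'
      (s := (J ×ˢ I).filter (fun q : ℤ × ℤ => n ≤ q.1 + q.2 ∧ q.1 ≤ j0 ∧ q.2 ≤ i0))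
      (t := (Finset.range (K + 1)).sigma (fun t => Finset.range (t + 1)))
      (f := fun q : ℤ × ℤ =>
        (if 0 ≤ q.1 + q.2 - n then
          zchoose q.1 (q.1 + q.2 - n).toNat •
            ((if 0 ≤ j0 - q.1 then
                ((-1 : ℤ) ^ j0.natAbs * zchoose j0 (j0 - q.1).toNat)
                  • (⇑D)^[(j0 - q.1).toNat] (g j0) else 0)
              * (⇑D)^[(q.1 + q.2 - n).toNat]
                (if 0 ≤ i0 - q.2 then
                  ((-1 : ℤ) ^ i0.natAbs * zchoose i0 (i0 - q.2).toNat)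
                    • (⇑D)^[(i0 - q.2).toNat] (f i0) else 0))
        else 0))
      (g := fun σ : Σ _ : ℕ, ℕ =>
        ((zchoose (n + (σ.1 : ℤ) - i0) σ.2 * zchoose i0 (σ.1 - σ.2))
            * (((-1 : ℤ) ^ i0.natAbs * (-1) ^ j0.natAbs)
                * zchoose j0 (K - σ.1)))
          • ((⇑D)^[σ.1] (f i0) * (⇑D)^[K - σ.1] (g j0)))
      (i := fun q : ℤ × ℤ => ⟨(q.1 + i0 - n).toNat, (q.1 + q.2 - n).toNat⟩)
      (j := fun σ : Σ _ : ℕ, ℕ => (n + (σ.1 : ℤ) - i0, (σ.2 : ℤ) + i0 - (σ.1 : ℤ)))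
      (by
        rintro ⟨a, b⟩ hq
        rw [Finset.mem_filter, Finset.mem_product, hJ, hI, Finset.mem_Icc, Finset.mem_Icc] at hq
        simp only [Finset.mem_sigma, Finset.mem_range]
        obtain ⟨⟨⟨_, _⟩, _, _⟩, _, _, _⟩ := hq
        constructor <;> omega)
      (by
        rintro ⟨t, ρ⟩ hσ
        rw [Finset.mem_sigma, Finset.mem_range, Finset.mem_range] at hσ
        rw [Finset.mem_filter, Finset.mem_product, hJ, hI, Finset.mem_Icc, Finset.mem_Icc]
        simp only []
        simp only [] at hσ
        obtain ⟨h1, h2⟩ := hσ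
        refine ⟨⟨⟨?_, ?_⟩, ?_, ?_⟩, ?_, ?_, ?_⟩ <;> omega)
      (by
        rintro ⟨a, b⟩ hq
        rw [Finset.mem_filter, Finset.mem_product, hJ, hI, Finset.mem_Icc, Finset.mem_Icc] at hq
        obtain ⟨⟨⟨_, _⟩, _, _⟩, _, _, _⟩ := hq
        simp only [Prod.mk.injEq]
        constructor <;> omega)
      (by
        rintro ⟨t, ρ⟩ hσ
        rw [Finset.mem_sigma, Finset.mem_range, Finset.mem_range] at hσ
        simp only [] at hσ
        obtain ⟨h1, h2⟩ := hσ
        have e1 : (n + (t : ℤ) - i0 + i0 - n).toNat = t := by omega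
        have e2 : (n + (t : ℤ) - i0 + ((ρ : ℤ) + i0 - (t : ℤ)) - n).toNat = ρ := by omega
        show (⟨(n + (t : ℤ) - i0 + i0 - n).toNat,
          (n + (t : ℤ) - i0 + ((ρ : ℤ) + i0 - (t : ℤ)) - n).toNat⟩ : Σ _ : ℕ, ℕ) = ⟨t, ρ⟩
        rw [e1, e2])
      (by
        rintro ⟨a, b⟩ hq
        rw [Finset.mem_filter, Finset.mem_product, hJ, hI, Finset.mem_Icc, Finset.mem_Icc] at hq
        obtain ⟨⟨⟨ha1, ha2⟩, hb1, hb2⟩, hab, haj, hbi⟩ := hq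
        simp only []
        have g1 : (0 : ℤ) ≤ a + b - n := by omega
        have g2 : (0 : ℤ) ≤ j0 - a := by omega
        have g3 : (0 : ℤ) ≤ i0 - b := by omega
        rw [if_pos g1, if_pos g2, if_pos g3]
        have e1 : ((a + i0 - n).toNat : ℤ) = a + i0 - n := by omega
        have e2 : (j0 - a).toNat = K - (a + i0 - n).toNat := by omega
        have e3 : n + ((a + i0 - n).toNat : ℤ) - i0 = a := by omega
        have e4 : (i0 - b).toNat = (a + i0 - n).toNat - (a + b - n).toNat := by omega
        have e5 : (a + b - n).toNat + ((a + i0 - n).toNat - (a + b - n).toNat)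
            = (a + i0 - n).toNat := by omega
        rw [e2, e4, dit_zsmul, ← Function.iterate_add_apply, e5, e3]
        rw [mul_smul_comm, smul_mul_assoc, smul_smul, smul_smul]
        rw [mul_comm ((⇑D)^[K - (a + i0 - n).toNat] (g j0)) ((⇑D)^[(a + i0 - n).toNat] (f i0))]
        congr 1
        ring)
    rw [hre, Finset.sum_sigma]
    apply Finset.sum_congr rfl
    intro t ht
    rw [Finset.mem_range] at ht
    have hfac : ∀ ρ ∈ Finset.range (t + 1),
        ((zchoose (n + (t : ℤ) - i0) ρ * zchoose i0 (t - ρ))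
            * (((-1 : ℤ) ^ i0.natAbs * (-1) ^ j0.natAbs) * zchoose j0 (K - t)))
          • ((⇑D)^[t] (f i0) * (⇑D)^[K - t] (g j0))
        = (zchoose (n + (t : ℤ) - i0) ρ * zchoose i0 (t - ρ))
            • ((((-1 : ℤ) ^ i0.natAbs * (-1) ^ j0.natAbs) * zchoose j0 (K - t))
              • ((⇑D)^[t] (f i0) * (⇑D)^[K - t] (g j0))) := by
      intro ρ _
      rw [smul_smul]
    rw [Finset.sum_congr rfl hfac, ← Finset.sum_smul]
    simp only [TwoBKP.zchoose]
    rw [TwoBKPAux.zch_vandermonde (n + (t : ℤ) - i0) i0 t]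
    have e6 : n + (t : ℤ) - i0 + i0 = n + t := by ring
    rw [e6, smul_smul]
    congr 1
    ring

lemma adj_pmul {Nf Ng : ℤ} (hf : ∀ i, Nf < i → f i = 0) (hg : ∀ j, Ng < j → g j = 0) :
    adj ⇑D (pmul ⇑D f g) = pmul ⇑D (adj ⇑D g) (adj ⇑D f) := by
  funext n
  rw [adj_pmul_lhs D f g hf hg n, adj_pmul_rhs D f g hf hg n]

end Main

open TwoBKP in
theorem quadratic_tensor_preserves_antisymmetry {𝒜 : Type*} [CommRing 𝒜]
    (D : Derivation ℤ 𝒜 𝒜) (A X : ℤ → 𝒜) (hA : IsPDO A) (hX : IsPDO X)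
    (hAanti : adj ⇑D A = -A) (hXsym : adj ⇑D X = X) :
    adj ⇑D (pmul ⇑D A (negPart (pmul ⇑D X A)) - pmul ⇑D (negPart (pmul ⇑D A X)) A)
      = -(pmul ⇑D A (negPart (pmul ⇑D X A)) - pmul ⇑D (negPart (pmul ⇑D A X)) A) := by
  obtain ⟨NA, hNA⟩ := hA
  obtain ⟨NX, hNX⟩ := hX
  set P := pmul ⇑D A (negPart (pmul ⇑D X A)) with hP
  set Q := pmul ⇑D (negPart (pmul ⇑D A X)) A with hQ
  have hbP : ∀ i, NA + (-1) < i → P i = 0 :=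
    pmul_bound D A _ hNA (negPart_bound (pmul ⇑D X A))
  have hbQ : ∀ i, (-1) + NA < i → Q i = 0 :=
    pmul_bound D _ A (negPart_bound (pmul ⇑D A X)) hNA
  have hadjP : adj ⇑D P = Q := by
    rw [hP, adj_pmul D A _ hNA (negPart_bound (pmul ⇑D X A)),
      adj_negPart, adj_pmul D X A hNX hNA, hAanti, hXsym, pmul_neg_left,
      negPart_neg', pmul_neg_left, pmul_neg_right, neg_neg]
  have hadjQ : adj ⇑D Q = P := by
    rw [hQ, adj_pmul D _ A (negPart_bound (pmul ⇑D A X)) hNA,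
      adj_negPart, adj_pmul D A X hNA hNX, hAanti, hXsym, pmul_neg_right,
      negPart_neg', pmul_neg_right, pmul_neg_left, neg_neg]
  rw [adj_sub D P Q hbP hbQ, hadjP, hadjQ]
  abel
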